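/- Weighted decomposition of the OLS interaction coefficient with a binary covariate: when X is binary, the pooled DID interaction coefficient β₃ (from regressing Y on constant, D, P, D·P, X) can be written as a convex combination β₃ = ω₁ β₃^{(1)} + ω₀ β₃^{(0)} with ω₁ + ω₀ = 1, ω₁, ω₀ ≥ 0, where β₃^{(x)} is the DID interaction coefficient from the same regression restricted to the subsample with X = x, and the weights are proportional to the subsample sums of squared FWL residuals of D·P. -/

import Mathlib

open scoped Classical

lemma orth_of_min {ι : Type*} (s : Finset ι) (u v : ι → ℝ)
    (h : ∀ t : ℝ, ∑ i ∈ s, (u i) ^ 2 ≤ ∑ i ∈ s, (u i - t * v i) ^ 2) :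
    ∑ i ∈ s, u i * v i = 0 := by
  set S := ∑ i ∈ s, u i * v i with hS
  set Q := ∑ i ∈ s, (v i) ^ 2 with hQdef
  have hQ : 0 ≤ Q := Finset.sum_nonneg fun i _ => sq_nonneg _
  have key : ∀ t : ℝ, 0 ≤ t ^ 2 * Q - 2 * t * S := by
    intro t
    have h1 := h t
    have h2 : ∑ i ∈ s, (u i - t * v i) ^ 2
        = (∑ i ∈ s, (u i) ^ 2) - 2 * t * S + t ^ 2 * Q := by
      rw [hS, hQdef, Finset.mul_sum, Finset.mul_sum, ← Finset.sum_sub_distrib,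
        ← Finset.sum_add_distrib]
      exact Finset.sum_congr rfl fun i _ => by ring
    rw [h2] at h1
    linarith
  by_contra hSne
  have hS2 : 0 < S ^ 2 := by positivity
  have hQ1 : (0:ℝ) < Q + 1 := by linarith
  have h3 := key (S / (Q + 1))
  have h5 : (S / (Q + 1)) ^ 2 * Q - 2 * (S / (Q + 1)) * S
      = (S ^ 2 * Q - 2 * S ^ 2 * (Q + 1)) / ((Q + 1) ^ 2) := by
    field_simp
  rw [h5] at h3
  have h7 := mul_nonneg h3 (by positivity : (0:ℝ) ≤ (Q + 1) ^ 2)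
  rw [div_mul_cancel₀ _ (by positivity : ((Q + 1) ^ 2 : ℝ) ≠ 0)] at h7
  nlinarith [mul_nonneg hS2.le hQ]


/-- With a binary covariate `X`, the pooled DID interaction coefficient is
a convex combination of the subsample (`X = 1` and `X = 0`) DID interaction coefficients,
with weights proportional to the subsample sums of squared FWL residuals of `D·P`. -/
theorem did_coefficient_weighted_decomposition (n : ℕ) (Y D P X : Fin n → ℝ)
    (hD : ∀ i, D i = 0 ∨ D i = 1) (hP : ∀ i, P i = 0 ∨ P i = 1)
    (hX : ∀ i, X i = 0 ∨ X i = 1)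
    -- full-sample regression of Y on (1, D, P, D·P, X)
    (β₀ β₁ β₂ β₃ β₄ : ℝ)
    (hβ : ∀ a b c e f : ℝ,
      ∑ i, (Y i - β₀ - β₁ * D i - β₂ * P i - β₃ * (D i * P i) - β₄ * X i) ^ 2 ≤
        ∑ i, (Y i - a - b * D i - c * P i - e * (D i * P i) - f * X i) ^ 2)
    -- FWL projection of D·P on (1, D, P, X) in the full sample and its residual r
    (a₀ a₁ a₂ a₃ : ℝ)
    (hproj : ∀ x y z w : ℝ,
      ∑ i, (D i * P i - a₀ - a₁ * D i - a₂ * P i - a₃ * X i) ^ 2 ≤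
        ∑ i, (D i * P i - x - y * D i - z * P i - w * X i) ^ 2)
    (r : Fin n → ℝ)
    (hr : ∀ i, r i = D i * P i - a₀ - a₁ * D i - a₂ * P i - a₃ * X i)
    (hr2 : ∑ i, r i ^ 2 ≠ 0)
    -- subsample regressions of Y on (1, D, P, D·P) for X = 1 and X = 0
    (b₀ b₁ b₂ β₃x1 : ℝ)
    (hb : ∀ a b c e : ℝ,
      ∑ i ∈ Finset.univ.filter (fun i => X i = 1),
          (Y i - b₀ - b₁ * D i - b₂ * P i - β₃x1 * (D i * P i)) ^ 2 ≤
        ∑ i ∈ Finset.univ.filter (fun i => X i = 1),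
          (Y i - a - b * D i - c * P i - e * (D i * P i)) ^ 2)
    (c₀ c₁ c₂ β₃x0 : ℝ)
    (hc : ∀ a b c e : ℝ,
      ∑ i ∈ Finset.univ.filter (fun i => X i = 0),
          (Y i - c₀ - c₁ * D i - c₂ * P i - β₃x0 * (D i * P i)) ^ 2 ≤
        ∑ i ∈ Finset.univ.filter (fun i => X i = 0),
          (Y i - a - b * D i - c * P i - e * (D i * P i)) ^ 2)
    -- subsample FWL projections of D·P on (1, D, P), coinciding with r on each subsample
    (d₀ d₁ d₂ : ℝ)
    (hd : ∀ x y z : ℝ,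
      ∑ i ∈ Finset.univ.filter (fun i => X i = 1),
          (D i * P i - d₀ - d₁ * D i - d₂ * P i) ^ 2 ≤
        ∑ i ∈ Finset.univ.filter (fun i => X i = 1),
          (D i * P i - x - y * D i - z * P i) ^ 2)
    (hrd : ∀ i, X i = 1 → r i = D i * P i - d₀ - d₁ * D i - d₂ * P i)
    (e₀ e₁ e₂ : ℝ)
    (he : ∀ x y z : ℝ,
      ∑ i ∈ Finset.univ.filter (fun i => X i = 0),
          (D i * P i - e₀ - e₁ * D i - e₂ * P i) ^ 2 ≤
        ∑ i ∈ Finset.univ.filter (fun i => X i = 0),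
          (D i * P i - x - y * D i - z * P i) ^ 2)
    (hre : ∀ i, X i = 0 → r i = D i * P i - e₀ - e₁ * D i - e₂ * P i) :
    (∑ i ∈ Finset.univ.filter (fun i => X i = 1), r i ^ 2) / (∑ i, r i ^ 2) +
      (∑ i ∈ Finset.univ.filter (fun i => X i = 0), r i ^ 2) / (∑ i, r i ^ 2) = 1 ∧
    0 ≤ (∑ i ∈ Finset.univ.filter (fun i => X i = 1), r i ^ 2) / (∑ i, r i ^ 2) ∧
    0 ≤ (∑ i ∈ Finset.univ.filter (fun i => X i = 0), r i ^ 2) / (∑ i, r i ^ 2) ∧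
    β₃ =
      ((∑ i ∈ Finset.univ.filter (fun i => X i = 1), r i ^ 2) / (∑ i, r i ^ 2)) * β₃x1 +
      ((∑ i ∈ Finset.univ.filter (fun i => X i = 0), r i ^ 2) / (∑ i, r i ^ 2)) * β₃x0 := by
  classical
  set s1 := Finset.univ.filter (fun i => X i = 1) with hs1
  set s0 := Finset.univ.filter (fun i => X i = 0) with hs0
  -- split of sums over the two subsamples
  have split : ∀ f : Fin n → ℝ, ∑ i, f i = (∑ i ∈ s1, f i) + (∑ i ∈ s0, f i) := by
    intro f
    have h := Finset.sum_filter_add_sum_filter_not Finset.univ (fun i => X i = 1) f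
    rw [← h]
    congr 1
    rw [hs0]
    apply Finset.sum_congr
    · apply Finset.filter_congr
      intro i _
      rcases hX i with h0 | h1
      · simp [h0]
      · simp [h1]
    · intro i _
      rfl
  -- full-sample FWL residual orthogonality facts
  have G0 : ∑ i, r i * (1:ℝ) = 0 := by
    apply orth_of_min
    intro t
    have h := hproj (a₀ + t) a₁ a₂ a₃
    have e : ∑ i, (D i * P i - (a₀ + t) - a₁ * D i - a₂ * P i - a₃ * X i) ^ 2
        = ∑ i, (r i - t * 1) ^ 2 := Finset.sum_congr rfl fun i _ => by rw [hr i]; ring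
    rw [← e]
    calc ∑ i, r i ^ 2 = ∑ i, (D i * P i - a₀ - a₁ * D i - a₂ * P i - a₃ * X i) ^ 2 :=
          Finset.sum_congr rfl fun i _ => by rw [hr i]
      _ ≤ _ := h
  have G1 : ∑ i, r i * D i = 0 := by
    apply orth_of_min
    intro t
    have h := hproj a₀ (a₁ + t) a₂ a₃
    have e : ∑ i, (D i * P i - a₀ - (a₁ + t) * D i - a₂ * P i - a₃ * X i) ^ 2
        = ∑ i, (r i - t * D i) ^ 2 := Finset.sum_congr rfl fun i _ => by rw [hr i]; ring
    rw [← e]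
    calc ∑ i, r i ^ 2 = ∑ i, (D i * P i - a₀ - a₁ * D i - a₂ * P i - a₃ * X i) ^ 2 :=
          Finset.sum_congr rfl fun i _ => by rw [hr i]
      _ ≤ _ := h
  have G2 : ∑ i, r i * P i = 0 := by
    apply orth_of_min
    intro t
    have h := hproj a₀ a₁ (a₂ + t) a₃
    have e : ∑ i, (D i * P i - a₀ - a₁ * D i - (a₂ + t) * P i - a₃ * X i) ^ 2
        = ∑ i, (r i - t * P i) ^ 2 := Finset.sum_congr rfl fun i _ => by rw [hr i]; ring
    rw [← e]
    calc ∑ i, r i ^ 2 = ∑ i, (D i * P i - a₀ - a₁ * D i - a₂ * P i - a₃ * X i) ^ 2 :=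
          Finset.sum_congr rfl fun i _ => by rw [hr i]
      _ ≤ _ := h
  have G3 : ∑ i, r i * X i = 0 := by
    apply orth_of_min
    intro t
    have h := hproj a₀ a₁ a₂ (a₃ + t)
    have e : ∑ i, (D i * P i - a₀ - a₁ * D i - a₂ * P i - (a₃ + t) * X i) ^ 2
        = ∑ i, (r i - t * X i) ^ 2 := Finset.sum_congr rfl fun i _ => by rw [hr i]; ring
    rw [← e]
    calc ∑ i, r i ^ 2 = ∑ i, (D i * P i - a₀ - a₁ * D i - a₂ * P i - a₃ * X i) ^ 2 :=
          Finset.sum_congr rfl fun i _ => by rw [hr i]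
      _ ≤ _ := h
  -- full-sample regression residual orthogonal to r
  have F1 : ∑ i, (Y i - β₀ - β₁ * D i - β₂ * P i - β₃ * (D i * P i) - β₄ * X i) * r i = 0 := by
    apply orth_of_min
    intro t
    have h := hβ (β₀ - t * a₀) (β₁ - t * a₁) (β₂ - t * a₂) (β₃ + t) (β₄ - t * a₃)
    have e : ∑ i, (Y i - (β₀ - t * a₀) - (β₁ - t * a₁) * D i - (β₂ - t * a₂) * P i
          - (β₃ + t) * (D i * P i) - (β₄ - t * a₃) * X i) ^ 2
        = ∑ i, ((Y i - β₀ - β₁ * D i - β₂ * P i - β₃ * (D i * P i) - β₄ * X i) - t * r i) ^ 2 :=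
      Finset.sum_congr rfl fun i _ => by rw [hr i]; ring
    rw [← e]
    exact h
  -- key full-sample identity
  have keyfull : ∑ i, Y i * r i = β₃ * ∑ i, r i ^ 2 := by
    calc ∑ i, Y i * r i
        = ∑ i, ((Y i - β₀ - β₁ * D i - β₂ * P i - β₃ * (D i * P i) - β₄ * X i) * r i
            + (β₀ + β₃ * a₀) * (r i * 1) + (β₁ + β₃ * a₁) * (r i * D i)
            + (β₂ + β₃ * a₂) * (r i * P i) + (β₄ + β₃ * a₃) * (r i * X i)
            + β₃ * r i ^ 2) :=
          Finset.sum_congr rfl fun i _ => by rw [hr i]; ring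
      _ = (∑ i, (Y i - β₀ - β₁ * D i - β₂ * P i - β₃ * (D i * P i) - β₄ * X i) * r i)
            + (β₀ + β₃ * a₀) * (∑ i, r i * 1) + (β₁ + β₃ * a₁) * (∑ i, r i * D i)
            + (β₂ + β₃ * a₂) * (∑ i, r i * P i) + (β₄ + β₃ * a₃) * (∑ i, r i * X i)
            + β₃ * (∑ i, r i ^ 2) := by
          simp only [Finset.sum_add_distrib, ← Finset.mul_sum]
      _ = β₃ * ∑ i, r i ^ 2 := by rw [F1, G0, G1, G2, G3]; ring
  -- subsample X = 1 facts
  have hmem1 : ∀ i ∈ s1, X i = 1 := fun i hi => (Finset.mem_filter.mp hi).2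
  have H0 : ∑ i ∈ s1, r i * (1:ℝ) = 0 := by
    apply orth_of_min
    intro t
    have h := hd (d₀ + t) d₁ d₂
    have e : ∑ i ∈ s1, (D i * P i - (d₀ + t) - d₁ * D i - d₂ * P i) ^ 2
        = ∑ i ∈ s1, (r i - t * 1) ^ 2 :=
      Finset.sum_congr rfl fun i hi => by rw [hrd i (hmem1 i hi)]; ring
    rw [← e]
    calc ∑ i ∈ s1, r i ^ 2 = ∑ i ∈ s1, (D i * P i - d₀ - d₁ * D i - d₂ * P i) ^ 2 :=
          Finset.sum_congr rfl fun i hi => by rw [hrd i (hmem1 i hi)]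
      _ ≤ _ := h
  have H1 : ∑ i ∈ s1, r i * D i = 0 := by
    apply orth_of_min
    intro t
    have h := hd d₀ (d₁ + t) d₂
    have e : ∑ i ∈ s1, (D i * P i - d₀ - (d₁ + t) * D i - d₂ * P i) ^ 2
        = ∑ i ∈ s1, (r i - t * D i) ^ 2 :=
      Finset.sum_congr rfl fun i hi => by rw [hrd i (hmem1 i hi)]; ring
    rw [← e]
    calc ∑ i ∈ s1, r i ^ 2 = ∑ i ∈ s1, (D i * P i - d₀ - d₁ * D i - d₂ * P i) ^ 2 :=
          Finset.sum_congr rfl fun i hi => by rw [hrd i (hmem1 i hi)]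
      _ ≤ _ := h
  have H2 : ∑ i ∈ s1, r i * P i = 0 := by
    apply orth_of_min
    intro t
    have h := hd d₀ d₁ (d₂ + t)
    have e : ∑ i ∈ s1, (D i * P i - d₀ - d₁ * D i - (d₂ + t) * P i) ^ 2
        = ∑ i ∈ s1, (r i - t * P i) ^ 2 :=
      Finset.sum_congr rfl fun i hi => by rw [hrd i (hmem1 i hi)]; ring
    rw [← e]
    calc ∑ i ∈ s1, r i ^ 2 = ∑ i ∈ s1, (D i * P i - d₀ - d₁ * D i - d₂ * P i) ^ 2 :=
          Finset.sum_congr rfl fun i hi => by rw [hrd i (hmem1 i hi)]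
      _ ≤ _ := h
  have HF : ∑ i ∈ s1, (Y i - b₀ - b₁ * D i - b₂ * P i - β₃x1 * (D i * P i)) * r i = 0 := by
    apply orth_of_min
    intro t
    have h := hb (b₀ - t * d₀) (b₁ - t * d₁) (b₂ - t * d₂) (β₃x1 + t)
    have e : ∑ i ∈ s1, (Y i - (b₀ - t * d₀) - (b₁ - t * d₁) * D i - (b₂ - t * d₂) * P i
          - (β₃x1 + t) * (D i * P i)) ^ 2
        = ∑ i ∈ s1, ((Y i - b₀ - b₁ * D i - b₂ * P i - β₃x1 * (D i * P i)) - t * r i) ^ 2 :=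
      Finset.sum_congr rfl fun i hi => by rw [hrd i (hmem1 i hi)]; ring
    rw [← e]
    exact h
  have key1 : ∑ i ∈ s1, Y i * r i = β₃x1 * ∑ i ∈ s1, r i ^ 2 := by
    calc ∑ i ∈ s1, Y i * r i
        = ∑ i ∈ s1, ((Y i - b₀ - b₁ * D i - b₂ * P i - β₃x1 * (D i * P i)) * r i
            + (b₀ + β₃x1 * d₀) * (r i * 1) + (b₁ + β₃x1 * d₁) * (r i * D i)
            + (b₂ + β₃x1 * d₂) * (r i * P i) + β₃x1 * r i ^ 2) :=
          Finset.sum_congr rfl fun i hi => by rw [hrd i (hmem1 i hi)]; ring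
      _ = (∑ i ∈ s1, (Y i - b₀ - b₁ * D i - b₂ * P i - β₃x1 * (D i * P i)) * r i)
            + (b₀ + β₃x1 * d₀) * (∑ i ∈ s1, r i * 1) + (b₁ + β₃x1 * d₁) * (∑ i ∈ s1, r i * D i)
            + (b₂ + β₃x1 * d₂) * (∑ i ∈ s1, r i * P i) + β₃x1 * (∑ i ∈ s1, r i ^ 2) := by
          simp only [Finset.sum_add_distrib, ← Finset.mul_sum]
      _ = β₃x1 * ∑ i ∈ s1, r i ^ 2 := by rw [HF, H0, H1, H2]; ring
  -- subsample X = 0 facts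
  have hmem0 : ∀ i ∈ s0, X i = 0 := fun i hi => (Finset.mem_filter.mp hi).2
  have K0 : ∑ i ∈ s0, r i * (1:ℝ) = 0 := by
    apply orth_of_min
    intro t
    have h := he (e₀ + t) e₁ e₂
    have e : ∑ i ∈ s0, (D i * P i - (e₀ + t) - e₁ * D i - e₂ * P i) ^ 2
        = ∑ i ∈ s0, (r i - t * 1) ^ 2 :=
      Finset.sum_congr rfl fun i hi => by rw [hre i (hmem0 i hi)]; ring
    rw [← e]
    calc ∑ i ∈ s0, r i ^ 2 = ∑ i ∈ s0, (D i * P i - e₀ - e₁ * D i - e₂ * P i) ^ 2 :=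
          Finset.sum_congr rfl fun i hi => by rw [hre i (hmem0 i hi)]
      _ ≤ _ := h
  have K1 : ∑ i ∈ s0, r i * D i = 0 := by
    apply orth_of_min
    intro t
    have h := he e₀ (e₁ + t) e₂
    have e : ∑ i ∈ s0, (D i * P i - e₀ - (e₁ + t) * D i - e₂ * P i) ^ 2
        = ∑ i ∈ s0, (r i - t * D i) ^ 2 :=
      Finset.sum_congr rfl fun i hi => by rw [hre i (hmem0 i hi)]; ring
    rw [← e]
    calc ∑ i ∈ s0, r i ^ 2 = ∑ i ∈ s0, (D i * P i - e₀ - e₁ * D i - e₂ * P i) ^ 2 :=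
          Finset.sum_congr rfl fun i hi => by rw [hre i (hmem0 i hi)]
      _ ≤ _ := h
  have K2 : ∑ i ∈ s0, r i * P i = 0 := by
    apply orth_of_min
    intro t
    have h := he e₀ e₁ (e₂ + t)
    have e : ∑ i ∈ s0, (D i * P i - e₀ - e₁ * D i - (e₂ + t) * P i) ^ 2
        = ∑ i ∈ s0, (r i - t * P i) ^ 2 :=
      Finset.sum_congr rfl fun i hi => by rw [hre i (hmem0 i hi)]; ring
    rw [← e]
    calc ∑ i ∈ s0, r i ^ 2 = ∑ i ∈ s0, (D i * P i - e₀ - e₁ * D i - e₂ * P i) ^ 2 :=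
          Finset.sum_congr rfl fun i hi => by rw [hre i (hmem0 i hi)]
      _ ≤ _ := h
  have KF : ∑ i ∈ s0, (Y i - c₀ - c₁ * D i - c₂ * P i - β₃x0 * (D i * P i)) * r i = 0 := by
    apply orth_of_min
    intro t
    have h := hc (c₀ - t * e₀) (c₁ - t * e₁) (c₂ - t * e₂) (β₃x0 + t)
    have e : ∑ i ∈ s0, (Y i - (c₀ - t * e₀) - (c₁ - t * e₁) * D i - (c₂ - t * e₂) * P i
          - (β₃x0 + t) * (D i * P i)) ^ 2
        = ∑ i ∈ s0, ((Y i - c₀ - c₁ * D i - c₂ * P i - β₃x0 * (D i * P i)) - t * r i) ^ 2 :=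
      Finset.sum_congr rfl fun i hi => by rw [hre i (hmem0 i hi)]; ring
    rw [← e]
    exact h
  have key0 : ∑ i ∈ s0, Y i * r i = β₃x0 * ∑ i ∈ s0, r i ^ 2 := by
    calc ∑ i ∈ s0, Y i * r i
        = ∑ i ∈ s0, ((Y i - c₀ - c₁ * D i - c₂ * P i - β₃x0 * (D i * P i)) * r i
            + (c₀ + β₃x0 * e₀) * (r i * 1) + (c₁ + β₃x0 * e₁) * (r i * D i)
            + (c₂ + β₃x0 * e₂) * (r i * P i) + β₃x0 * r i ^ 2) :=
          Finset.sum_congr rfl fun i hi => by rw [hre i (hmem0 i hi)]; ring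
      _ = (∑ i ∈ s0, (Y i - c₀ - c₁ * D i - c₂ * P i - β₃x0 * (D i * P i)) * r i)
            + (c₀ + β₃x0 * e₀) * (∑ i ∈ s0, r i * 1) + (c₁ + β₃x0 * e₁) * (∑ i ∈ s0, r i * D i)
            + (c₂ + β₃x0 * e₂) * (∑ i ∈ s0, r i * P i) + β₃x0 * (∑ i ∈ s0, r i ^ 2) := by
          simp only [Finset.sum_add_distrib, ← Finset.mul_sum]
      _ = β₃x0 * ∑ i ∈ s0, r i ^ 2 := by rw [KF, K0, K1, K2]; ring
  -- combine
  set T := ∑ i, r i ^ 2 with hT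
  set S1 := ∑ i ∈ s1, r i ^ 2 with hS1
  set S0 := ∑ i ∈ s0, r i ^ 2 with hS0
  have hTsplit : T = S1 + S0 := split _
  have hYsplit : (∑ i, Y i * r i) = (∑ i ∈ s1, Y i * r i) + (∑ i ∈ s0, Y i * r i) := split _
  have hmain : β₃ * T = β₃x1 * S1 + β₃x0 * S0 := by
    rw [← keyfull, hYsplit, key1, key0]
  have hS1n : 0 ≤ S1 := Finset.sum_nonneg fun i _ => sq_nonneg _
  have hS0n : 0 ≤ S0 := Finset.sum_nonneg fun i _ => sq_nonneg _
  have hTn : 0 ≤ T := Finset.sum_nonneg fun i _ => sq_nonneg _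
  refine ⟨?_, div_nonneg hS1n hTn, div_nonneg hS0n hTn, ?_⟩
  · rw [← add_div, ← hTsplit, div_self hr2]
  · field_simp
    linarith [hmain]
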